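/- Let $c_k = \frac{k!\,(k+m+n-1)!}{(k+m)!\,(k+n-1)!\,{}_1F_1(1-n,\,1-k-n,\,m)}$ for natural numbers $k$, where $n \ge 1$ and $m \ge 1$ are fixed integers and ${}_1F_1$ is the (terminating) confluent hypergeometric function. Then as $k \to \infty$, $c_k = 1 + \frac{m(n-1)(n-2)}{2k^2} + O(k^{-3})$. -/

import Mathlib

open Real Asymptotics Filter

/-- The terminating confluent hypergeometric function `₁F₁(-p, b, z)`. -/
noncomputable def oneFOne (p : ℕ) (b z : ℝ) : ℝ :=
  ∑ s ∈ Finset.range (p+1),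
    ((∏ i ∈ Finset.range s, (-(p:ℝ) + i)) / (∏ i ∈ Finset.range s, (b + i)))
      * z^s / (s.factorial : ℝ)

open Finset

lemma factHelper (a : ℕ) : ∀ b : ℕ, (a + b).factorial = a.factorial * ∏ i ∈ range b, (a + 1 + i)
  | 0 => by simp
  | (b+1) => by
      rw [prod_range_succ, ← Nat.add_assoc, Nat.factorial_succ, factHelper a b]
      ring

lemma abs_div_le3 (N Dq x C : ℝ) (hx : 0 < x) (hN : |N| ≤ C) (hD : x^3 ≤ Dq) :
    |N / Dq| ≤ C / x^3 := by
  have hDq : 0 < Dq := lt_of_lt_of_le (by positivity) hD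
  rw [abs_div, abs_of_pos hDq]
  calc |N| / Dq ≤ C / Dq := by gcongr
    _ ≤ C / x^3 := by
        apply div_le_div_of_nonneg_left ?_ (by positivity) hD |>.trans_eq rfl
        exact le_trans (abs_nonneg N) hN

lemma abs_div_le4 (N Dq x C : ℝ) (hx : 0 < x) (hN : |N| ≤ C * x) (hD : x^4 ≤ Dq) :
    |N / Dq| ≤ C / x^3 := by
  have hDq : 0 < Dq := lt_of_lt_of_le (by positivity) hD
  have hC : 0 ≤ C := by
    by_contra hc
    push_neg at hc
    nlinarith [abs_nonneg N]
  rw [abs_div, abs_of_pos hDq]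
  calc |N| / Dq ≤ (C * x) / Dq := by gcongr
    _ ≤ (C * x) / x^4 := by gcongr
    _ = C / x^3 := by
        field_simp

lemma prodExp (c : ℝ) : ∀ m : ℕ, ∃ C : ℝ, ∀ k : ℕ, 1 ≤ k →
    |(∏ i ∈ range m, (1 + c/((k:ℝ)+1+i))) -
      (1 + (m:ℝ)*c/(k:ℝ) + (c^2*((m:ℝ)*((m:ℝ)-1)) - c*((m:ℝ)*((m:ℝ)+1)))/(2*(k:ℝ)^2))| ≤ C/(k:ℝ)^3
  | 0 => by
      refine ⟨0, fun k hk => ?_⟩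
      have hx : (0:ℝ) < (k:ℝ) := by exact_mod_cast hk
      simp
  | (m+1) => by
      obtain ⟨C, hC⟩ := prodExp c m
      set D : ℝ := c*((m:ℝ)+1)^2 - 3*c^2*((m:ℝ)*((m:ℝ)+1))/2 + c^3*((m:ℝ)*((m:ℝ)-1))/2 with hD
      refine ⟨C*(1+|c|) + |D|, fun k hk => ?_⟩
      have hx : (1:ℝ) ≤ (k:ℝ) := by exact_mod_cast hk
      have hx0 : (0:ℝ) < (k:ℝ) := by linarith
      set x : ℝ := (k:ℝ)
      have hden : (0:ℝ) < x + 1 + m := by positivity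
      set P : ℝ := ∏ i ∈ range m, (1 + c/(x+1+i)) with hP
      set E : ℝ := 1 + (m:ℝ)*c/x + (c^2*((m:ℝ)*((m:ℝ)-1)) - c*((m:ℝ)*((m:ℝ)+1)))/(2*x^2) with hE
      set u : ℝ := 1 + c/(x+1+m) with hu
      set E' : ℝ := 1 + ((m:ℝ)+1)*c/x +
        (c^2*(((m:ℝ)+1)*(((m:ℝ)+1)-1)) - c*(((m:ℝ)+1)*(((m:ℝ)+1)+1)))/(2*x^2) with hE'
      have hprod : ∏ i ∈ range (m+1), (1 + c/(x+1+i)) = P * u := by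
        rw [prod_range_succ]
      have hcast : ((m+1:ℕ):ℝ) = (m:ℝ)+1 := by push_cast; ring
      rw [hprod, hcast]
      have key : P * u - E' = (P - E) * u + (E * u - E') := by ring
      rw [key]
      have hid : E * u - E' = D / (x^2 * (x+1+m)) := by
        rw [hE, hu, hE', hD]
        field_simp
        ring
      have hub : |u| ≤ 1 + |c| := by
        rw [hu]
        refine (abs_add_le 1 _).trans ?_
        rw [abs_one, abs_div, abs_of_pos hden]
        have : |c| / (x + 1 + (m:ℝ)) ≤ |c| := div_le_self (abs_nonneg c) (by linarith)
        linarith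
      have h1 : |(P - E) * u| ≤ (C/x^3) * (1+|c|) := by
        rw [abs_mul]
        exact mul_le_mul (hC k hk) hub (abs_nonneg u) (le_trans (abs_nonneg _) (hC k hk))
      have h2 : |E * u - E'| ≤ |D| / x^3 := by
        rw [hid]
        apply abs_div_le3 _ _ _ _ hx0 le_rfl
        calc x^3 = x^2 * x := by ring
          _ ≤ x^2 * (x+1+m) := by nlinarith
      calc |(P - E) * u + (E * u - E')| ≤ |(P - E) * u| + |E * u - E'| := abs_add_le _ _
        _ ≤ (C/x^3) * (1+|c|) + |D| / x^3 := add_le_add h1 h2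
        _ = (C*(1+|c|) + |D|)/x^3 := by ring

noncomputable def Tt (n m k s : ℕ) : ℝ :=
  ((n-1).choose s : ℝ) * (m:ℝ)^s / ∏ i ∈ Finset.range s, ((k:ℝ) + (n:ℝ) - 1 - i)

lemma prodCastSub (n : ℕ) : ∀ s : ℕ, s ≤ n → ∏ i ∈ range s, ((n:ℝ) - i) = (n.descFactorial s : ℝ)
  | 0, _ => by simp
  | (s+1), h => by
      rw [prod_range_succ, prodCastSub n s (le_of_lt h), Nat.descFactorial_succ]
      have : ((n - s : ℕ) : ℝ) = (n:ℝ) - s := by rw [Nat.cast_sub (le_of_lt h)]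
      push_cast [this]
      ring

lemma prod_neg_eq (s : ℕ) (f : ℕ → ℝ) :
    ∏ i ∈ range s, (-(f i)) = (-1)^s * ∏ i ∈ range s, f i := by
  rw [Finset.prod_congr rfl (fun i _ => neg_eq_neg_one_mul (f i)), Finset.prod_mul_distrib,
    Finset.prod_const, Finset.card_range]

lemma prodPosLem (n k s : ℕ) (hs : s < n) : 0 < ∏ i ∈ range s, ((k:ℝ) + (n:ℝ) - 1 - i) := by
  apply Finset.prod_pos
  intro i hi
  have hi' : i + 2 ≤ n := by have := Finset.mem_range.1 hi; omega
  have : (i:ℝ) + 2 ≤ (n:ℝ) := by exact_mod_cast hi'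
  have hk : (0:ℝ) ≤ (k:ℝ) := Nat.cast_nonneg k
  linarith

lemma prodGE (n k s : ℕ) (hs : s < n) (hk : 1 ≤ k) :
    (k:ℝ)^s ≤ ∏ i ∈ range s, ((k:ℝ) + (n:ℝ) - 1 - i) := by
  have : (k:ℝ)^s = ∏ _i ∈ range s, (k:ℝ) := by rw [Finset.prod_const, Finset.card_range]
  rw [this]
  apply Finset.prod_le_prod
  · intro i _; positivity
  · intro i hi
    have hi' : i + 1 ≤ n := by have := Finset.mem_range.1 hi; omega
    have : (i:ℝ) + 1 ≤ (n:ℝ) := by exact_mod_cast hi'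
    linarith

lemma oneFOne_eq (n m k : ℕ) (hn : 1 ≤ n) :
    oneFOne (n-1) (1 - (k:ℝ) - n) m = ∑ s ∈ Finset.range n, Tt n m k s := by
  unfold oneFOne Tt
  rw [Nat.sub_add_cancel hn]
  refine Finset.sum_congr rfl (fun s hs => ?_)
  have hs' : s < n := Finset.mem_range.1 hs
  have h1 : ∏ i ∈ range s, (-(((n-1:ℕ)):ℝ) + i)
      = (-1)^s * (((n-1).descFactorial s : ℕ) : ℝ) := by
    rw [← prodCastSub (n-1) s (by omega), ← prod_neg_eq]
    exact Finset.prod_congr rfl (fun i _ => by ring)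
  have h2 : ∏ i ∈ range s, ((1 - (k:ℝ) - n) + i)
      = (-1)^s * ∏ i ∈ range s, ((k:ℝ) + (n:ℝ) - 1 - i) := by
    rw [← prod_neg_eq]
    exact Finset.prod_congr rfl (fun i _ => by ring)
  rw [h1, h2, mul_div_mul_left _ _ (by positivity : ((-1:ℝ))^s ≠ 0)]
  have hDp : (0:ℝ) < ∏ i ∈ range s, ((k:ℝ) + (n:ℝ) - 1 - i) := prodPosLem n k s hs'
  have hdesc : (((n-1).descFactorial s : ℕ) : ℝ) = (s.factorial : ℝ) * ((n-1).choose s : ℝ) := by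
    rw [Nat.descFactorial_eq_factorial_mul_choose]; push_cast; ring
  rw [hdesc]
  have hfs : (s.factorial : ℝ) ≠ 0 := by positivity
  field_simp

lemma Tt_zero (n m k : ℕ) : Tt n m k 0 = 1 := by simp [Tt]

set_option maxHeartbeats 2000000 in
lemma sumExp (n m : ℕ) (hn : 1 ≤ n) : ∃ C : ℝ, ∀ k : ℕ, 1 ≤ k →
    |(∑ s ∈ range n, Tt n m k s) -
      (1 + ((n:ℝ)-1)*(m:ℝ)/(k:ℝ)
        + (((n:ℝ)-1)*((n:ℝ)-2)*(m:ℝ)^2/2 - ((n:ℝ)-1)^2*(m:ℝ))/(k:ℝ)^2)| ≤ C/(k:ℝ)^3 := by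
  match n, hn with
  | 1, _ =>
    refine ⟨0, fun k hk => ?_⟩
    have hx : (0:ℝ) < (k:ℝ) := by exact_mod_cast hk
    rw [Finset.sum_range_one, Tt_zero]
    norm_num
  | 2, _ =>
    refine ⟨(m:ℝ), fun k hk => ?_⟩
    have hx : (1:ℝ) ≤ (k:ℝ) := by exact_mod_cast hk
    have hx0 : (0:ℝ) < (k:ℝ) := by linarith
    set x : ℝ := (k:ℝ)
    have h1 : Tt 2 m k 1 = (m:ℝ)/(x+1) := by
      simp [Tt]
      norm_num
      ring
    rw [Finset.sum_range_succ, Finset.sum_range_one, Tt_zero, h1]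
    push_cast
    have hid : (1 + (m:ℝ)/(x+1)) - (1 + ((2:ℝ)-1)*(m:ℝ)/x + (((2:ℝ)-1)*((2:ℝ)-2)*(m:ℝ)^2/2 - ((2:ℝ)-1)^2*(m:ℝ))/x^2)
        = (m:ℝ) / (x^2*(x+1)) := by
      field_simp
      ring
    rw [hid]
    apply abs_div_le3 _ _ _ _ hx0 (by rw [abs_of_nonneg (Nat.cast_nonneg m)])
    nlinarith
  | (N+3), _ =>
    set n : ℕ := N + 3 with hnn
    have hn1 : 1 ≤ n := by omega
    have hn3 : (3:ℝ) ≤ (n:ℝ) := by exact_mod_cast Nat.le_add_left 3 N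
    set B : ℝ := ((n:ℝ)-1)*((n:ℝ)-2)*(m:ℝ)^2/2 with hB
    have hBnn : 0 ≤ B := by
      have h1 : (0:ℝ) ≤ (n:ℝ) - 1 := by linarith
      have h2 : (0:ℝ) ≤ (n:ℝ) - 2 := by linarith
      positivity
    set C1 : ℝ := ((n:ℝ)-1)^3*(m:ℝ) with hC1
    set C2 : ℝ := B * ((2*(n:ℝ)-3) + ((n:ℝ)-1)*((n:ℝ)-2)) with hC2
    set C3 : ℝ := ∑ i ∈ range N, ((n-1).choose (i+3) : ℝ)*(m:ℝ)^(i+3) with hC3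
    refine ⟨C1 + C2 + C3, fun k hk => ?_⟩
    have hx : (1:ℝ) ≤ (k:ℝ) := by exact_mod_cast hk
    have hx0 : (0:ℝ) < (k:ℝ) := by linarith
    set x : ℝ := (k:ℝ) with hxdef
    have hd1 : (0:ℝ) < x + (n:ℝ) - 1 := by linarith
    have hd2 : (0:ℝ) < x + (n:ℝ) - 2 := by linarith
    -- split the sum
    have hsplit : ∑ s ∈ range n, Tt n m k s
        = Tt n m k 0 + Tt n m k 1 + Tt n m k 2 + ∑ i ∈ range N, Tt n m k (i+3) := by
      rw [hnn, Finset.sum_range_succ', Finset.sum_range_succ', Finset.sum_range_succ']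
      have : ∀ i, i + 1 + 1 + 1 = i + 3 := fun i => by omega
      simp only [this, Nat.zero_add]
      ring
    -- evaluate T1, T2
    have hcast1 : ((n-1 : ℕ) : ℝ) = (n:ℝ) - 1 := by
      rw [Nat.cast_sub hn1]; norm_num
    have hT1 : Tt n m k 1 = ((n:ℝ)-1)*(m:ℝ)/(x + (n:ℝ) - 1) := by
      unfold Tt
      rw [Finset.prod_range_one, Nat.choose_one_right, hcast1]
      push_cast
      ring_nf
      rfl
    have hT2 : Tt n m k 2 = B/((x + (n:ℝ) - 1)*(x + (n:ℝ) - 2)) := by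
      unfold Tt
      rw [Finset.prod_range_succ, Finset.prod_range_one, Nat.cast_choose_two, hcast1, hB]
      push_cast
      ring_nf
      rfl
    -- the three error-term bounds
    have hE1 : |Tt n m k 1 - (((n:ℝ)-1)*(m:ℝ)/x - ((n:ℝ)-1)^2*(m:ℝ)/x^2)| ≤ C1/x^3 := by
      have hid : Tt n m k 1 - (((n:ℝ)-1)*(m:ℝ)/x - ((n:ℝ)-1)^2*(m:ℝ)/x^2)
          = (((n:ℝ)-1)^3*(m:ℝ)) / (x^2*(x + (n:ℝ) - 1)) := by
        rw [hT1]
        field_simp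
        ring
      rw [hid, hC1]
      apply abs_div_le3 _ _ _ _ hx0
      · have hnn1 : (0:ℝ) ≤ (n:ℝ)-1 := by linarith
        rw [abs_of_nonneg (by positivity : (0:ℝ) ≤ ((n:ℝ)-1)^3*(m:ℝ))]
      · nlinarith
    have hE2 : |Tt n m k 2 - B/x^2| ≤ C2/x^3 := by
      have hid : Tt n m k 2 - B/x^2
          = (-(B * ((2*(n:ℝ)-3)*x + ((n:ℝ)-1)*((n:ℝ)-2)))) / (x^2*((x + (n:ℝ) - 1)*(x + (n:ℝ) - 2))) := by
        rw [hT2]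
        field_simp
        ring
      rw [hid, hC2]
      have ha : (0:ℝ) ≤ 2*(n:ℝ)-3 := by linarith
      have hb : (0:ℝ) ≤ (2*(n:ℝ)-3)*x := mul_nonneg ha (le_of_lt hx0)
      have hc : (0:ℝ) ≤ ((n:ℝ)-1)*((n:ℝ)-2) := mul_nonneg (by linarith) (by linarith)
      apply abs_div_le4 _ _ _ _ hx0
      · rw [abs_neg, abs_of_nonneg (mul_nonneg hBnn (by linarith))]
        nlinarith [mul_nonneg (mul_nonneg hBnn hc) (sub_nonneg.2 hx)]
      · have h1 : x*x ≤ (x+(n:ℝ)-1)*(x+(n:ℝ)-2) := by nlinarith [hb, hc]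
        calc x^4 = x^2*(x*x) := by ring
          _ ≤ x^2*((x+(n:ℝ)-1)*(x+(n:ℝ)-2)) := by
              exact mul_le_mul_of_nonneg_left h1 (by positivity)
    have hE3 : |∑ i ∈ range N, Tt n m k (i+3)| ≤ C3/x^3 := by
      calc |∑ i ∈ range N, Tt n m k (i+3)| ≤ ∑ i ∈ range N, |Tt n m k (i+3)| :=
            Finset.abs_sum_le_sum_abs _ _
        _ ≤ ∑ i ∈ range N, (((n-1).choose (i+3) : ℝ)*(m:ℝ)^(i+3))/x^3 := by
            apply Finset.sum_le_sum
            intro i hi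
            have hi' : i + 3 < n := by have := Finset.mem_range.1 hi; omega
            unfold Tt
            apply abs_div_le3 _ _ _ _ hx0
            · rw [abs_of_nonneg (by positivity)]
            · calc x^3 ≤ x^(i+3) := pow_le_pow_right₀ hx (by omega)
                _ ≤ _ := prodGE n k (i+3) hi' hk
        _ = C3/x^3 := by rw [hC3, Finset.sum_div]
    -- assemble
    have hdecomp : (∑ s ∈ range n, Tt n m k s) -
        (1 + ((n:ℝ)-1)*(m:ℝ)/x + (((n:ℝ)-1)*((n:ℝ)-2)*(m:ℝ)^2/2 - ((n:ℝ)-1)^2*(m:ℝ))/x^2)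
        = (Tt n m k 1 - (((n:ℝ)-1)*(m:ℝ)/x - ((n:ℝ)-1)^2*(m:ℝ)/x^2))
          + (Tt n m k 2 - B/x^2)
          + (∑ i ∈ range N, Tt n m k (i+3)) := by
      rw [hsplit, Tt_zero, hB]
      field_simp
      ring
    rw [hdecomp]
    calc |_ + _ + _| ≤ |Tt n m k 1 - (((n:ℝ)-1)*(m:ℝ)/x - ((n:ℝ)-1)^2*(m:ℝ)/x^2)
          + (Tt n m k 2 - B/x^2)| + |∑ i ∈ range N, Tt n m k (i+3)| := abs_add_le _ _
      _ ≤ (|Tt n m k 1 - (((n:ℝ)-1)*(m:ℝ)/x - ((n:ℝ)-1)^2*(m:ℝ)/x^2)|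
          + |Tt n m k 2 - B/x^2|) + |∑ i ∈ range N, Tt n m k (i+3)| := by
            gcongr
            exact abs_add_le _ _
      _ ≤ (C1/x^3 + C2/x^3) + C3/x^3 := by gcongr
      _ = (C1 + C2 + C3)/x^3 := by ring


lemma Fge1 (n m k : ℕ) (hn : 1 ≤ n) : 1 ≤ ∑ s ∈ range n, Tt n m k s := by
  have h0 : Tt n m k 0 = 1 := Tt_zero n m k
  rw [← h0]
  apply Finset.single_le_sum (f := Tt n m k) ?_ (Finset.mem_range.2 hn)
  intro s hs
  have := prodPosLem n k s (Finset.mem_range.1 hs)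
  unfold Tt
  positivity

lemma ratioEq (n m k : ℕ) (hn : 1 ≤ n) (hF : (0:ℝ) < oneFOne (n-1) (1 - (k:ℝ) - n) m) :
    (k.factorial : ℝ) * ((k+m+n-1).factorial : ℝ)
      / (((k+m).factorial : ℝ) * ((k+n-1).factorial : ℝ) * oneFOne (n-1) (1 - (k:ℝ) - n) m)
    = (∏ i ∈ range m, (1 + ((n:ℝ)-1)/((k:ℝ)+1+i))) / oneFOne (n-1) (1 - (k:ℝ) - n) m := by
  have e1 : k + m + n - 1 = (k + (n-1)) + m := by omega
  have e2 : k + n - 1 = k + (n-1) := by omega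
  rw [e1, e2, factHelper (k + (n-1)) m, factHelper k m]
  have hc : ((n - 1 : ℕ) : ℝ) = (n:ℝ) - 1 := by
    rw [Nat.cast_sub hn]; norm_num
  have hp1 : ((∏ i ∈ range m, (k + (n-1) + 1 + i) : ℕ) : ℝ)
      = ∏ i ∈ range m, ((k:ℝ) + (n:ℝ) + i) := by
    push_cast [hc]
    exact Finset.prod_congr rfl (fun i _ => by ring)
  have hp2 : ((∏ i ∈ range m, (k + 1 + i) : ℕ) : ℝ) = ∏ i ∈ range m, ((k:ℝ) + 1 + i) := by
    push_cast
    rfl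
  push_cast [hp1, hp2]
  have hne2 : (0:ℝ) < ∏ i ∈ range m, ((k:ℝ) + 1 + i) := by
    apply Finset.prod_pos
    intro i _
    positivity
  have hprd : (∏ i ∈ range m, ((k:ℝ) + (n:ℝ) + i))
      = (∏ i ∈ range m, ((k:ℝ) + 1 + i)) * ∏ i ∈ range m, (1 + ((n:ℝ)-1)/((k:ℝ)+1+i)) := by
    rw [← Finset.prod_mul_distrib]
    refine Finset.prod_congr rfl (fun i _ => ?_)
    have : ((k:ℝ) + 1 + i) ≠ 0 := by positivity
    field_simp
    ring
  rw [hprd]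
  have hkf : ((k.factorial : ℕ) : ℝ) ≠ 0 := by positivity
  have hkn : (((k + (n-1)).factorial : ℕ) : ℝ) ≠ 0 := by positivity
  field_simp

set_option maxHeartbeats 4000000 in
theorem epsilon_coefficient_asymptotics (n m : ℕ) (hn : 1 ≤ n) (hm : 1 ≤ m) :
    (fun k : ℕ =>
        ((k.factorial : ℝ) * (k+m+n-1).factorial
            / ((k+m).factorial * (k+n-1).factorial
                * oneFOne (n-1) (1 - (k:ℝ) - n) m))
          - (1 + (m:ℝ) * (n-1) * (n-2) / (2 * (k:ℝ)^2)))
      =O[atTop] fun k : ℕ => ((k:ℝ)^3)⁻¹ := by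
  set c : ℝ := (n:ℝ) - 1 with hc
  obtain ⟨Cp, hCp⟩ := prodExp c m
  obtain ⟨Cs, hCs⟩ := sumExp n m hn
  set a : ℝ := (m:ℝ) * c with ha
  set b' : ℝ := c*((n:ℝ)-2)*(m:ℝ)^2/2 - c^2*(m:ℝ) with hb'
  set c2 : ℝ := (m:ℝ) * c * ((n:ℝ)-2) / 2 with hc2
  set C : ℝ := Cp + Cs*(1+|c2|) + (|a*c2| + |b'*c2|) with hCdef
  rw [Asymptotics.isBigO_iff]
  refine ⟨C, ?_⟩
  filter_upwards [Filter.eventually_ge_atTop 1] with k hk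
  have hx : (1:ℝ) ≤ (k:ℝ) := by exact_mod_cast hk
  have hx0 : (0:ℝ) < (k:ℝ) := by linarith
  set x : ℝ := (k:ℝ) with hxd
  have hFrw : oneFOne (n-1) (1 - x - n) m = ∑ s ∈ range n, Tt n m k s := oneFOne_eq n m k hn
  have hF1 : 1 ≤ ∑ s ∈ range n, Tt n m k s := Fge1 n m k hn
  have hFpos : (0:ℝ) < oneFOne (n-1) (1 - x - n) m := by rw [hFrw]; linarith
  set P : ℝ := ∏ i ∈ range m, (1 + c/(x+1+i)) with hP
  set F : ℝ := ∑ s ∈ range n, Tt n m k s with hFd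
  have hrat : (k.factorial : ℝ) * ((k+m+n-1).factorial : ℝ)
      / (((k+m).factorial : ℝ) * ((k+n-1).factorial : ℝ) * oneFOne (n-1) (1 - x - n) m)
      = P / F := by
    rw [ratioEq n m k hn hFpos, hFrw]
  have hE : |P - (1 + (m:ℝ)*c/x + (c^2*((m:ℝ)*((m:ℝ)-1)) - c*((m:ℝ)*((m:ℝ)+1)))/(2*x^2))| ≤ Cp/x^3 :=
    hCp k hk
  have hE' : |F - (1 + c*(m:ℝ)/x + (c*((n:ℝ)-2)*(m:ℝ)^2/2 - c^2*(m:ℝ))/x^2)| ≤ Cs/x^3 := by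
    have := hCs k hk
    rw [← hc] at this
    exact this
  set E : ℝ := 1 + (m:ℝ)*c/x + (c^2*((m:ℝ)*((m:ℝ)-1)) - c*((m:ℝ)*((m:ℝ)+1)))/(2*x^2) with hEd
  set E' : ℝ := 1 + c*(m:ℝ)/x + (c*((n:ℝ)-2)*(m:ℝ)^2/2 - c^2*(m:ℝ))/x^2 with hE'd
  set G : ℝ := 1 + c2/x^2 with hGd
  have hGoal : (m:ℝ) * ((n:ℝ)-1) * ((n:ℝ)-2) / (2 * x^2) = c2/x^2 := by
    rw [hc2, hc]; ring
  have hGb : |G| ≤ 1 + |c2| := by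
    rw [hGd]
    refine (abs_add_le 1 _).trans ?_
    rw [abs_one, abs_div]
    have h1 : |c2| / |x^2| ≤ |c2| := by
      rw [abs_of_pos (by positivity : (0:ℝ) < x^2)]
      apply div_le_self (abs_nonneg c2)
      nlinarith
    linarith
  have hmid : |E' * G - E| ≤ (|a*c2| + |b'*c2|)/x^3 := by
    have hid : E' * G - E = (a*c2*x + b'*c2) / x^4 := by
      rw [hE'd, hGd, hEd, ha, hb', hc2, hc]
      field_simp
      ring
    rw [hid]
    apply abs_div_le4 _ _ _ _ hx0 ?_ le_rfl
    have h1 : |a*c2*x + b'*c2| ≤ |a*c2*x| + |b'*c2| := abs_add_le _ _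
    have h2 : |a*c2*x| = |a*c2| * x := by rw [abs_mul (a*c2) x, abs_of_pos hx0]
    nlinarith [abs_nonneg (b'*c2), abs_nonneg (a*c2)]
  have hnum : |P - F * G| ≤ C/x^3 := by
    have key : P - F * G = (P - E) - (F - E') * G - (E' * G - E) := by ring
    rw [key]
    calc |(P - E) - (F - E') * G - (E' * G - E)|
        ≤ |(P - E) - (F - E') * G| + |E' * G - E| := abs_sub _ _
      _ ≤ (|P - E| + |(F - E') * G|) + |E' * G - E| := by gcongr; exact abs_sub _ _
      _ ≤ (Cp/x^3 + (Cs/x^3)*(1+|c2|)) + (|a*c2| + |b'*c2|)/x^3 := by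
          gcongr
          · rw [abs_mul]
            exact mul_le_mul hE' hGb (abs_nonneg G) (le_trans (abs_nonneg _) hE')
      _ = C/x^3 := by rw [hCdef]; ring
  have hfin : |P / F - G| ≤ C/x^3 := by
    have hFne : F ≠ 0 := by linarith
    have : P / F - G = (P - F * G) / F := by
      field_simp
    rw [this, abs_div, abs_of_pos (by linarith : (0:ℝ) < F)]
    calc |P - F*G| / F ≤ |P - F*G| := div_le_self (abs_nonneg _) hF1
      _ ≤ C/x^3 := hnum
  rw [Real.norm_eq_abs, Real.norm_eq_abs, hrat, hGoal]
  have hxx : |((x^3)⁻¹ : ℝ)| = (x^3)⁻¹ := abs_of_pos (by positivity)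
  rw [hxx]
  calc |P / F - (1 + c2/x^2)| = |P/F - G| := by rw [hGd]
    _ ≤ C/x^3 := hfin
    _ = C * (x^3)⁻¹ := by ring
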